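/- Let k ≥ 2 and let χ1,…,χk be primitive characters mod 8 such that χ1⋯χk is induced by the primitive character mod 4. Then J_2(χ1,…,χk,2^3) = 2^{(3(k−1)+1)/2} · (−i) · ω^{k − (χ1(−1)+⋯+χk(−1))}. -/

import Mathlib

open Complex

/-- The generalized Jacobi sum `J_B(χ₁,…,χ_k, q)`. -/
noncomputable def Jsum {q : ℕ} [NeZero q] {k : ℕ}
    (χ : Fin k → DirichletCharacter ℂ q) (B : ZMod q) : ℂ :=
  ∑ x : Fin k → ZMod q, if (∑ i, x i) = B then ∏ i, χ i (x i) else 0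

/-- `ω = e^{πi/4}`. -/
noncomputable def omega : ℂ := Complex.exp (Real.pi * Complex.I / 4)

section Aux

open Finsupp

/-- `Φ χ` is the element of the group algebra with coefficients the values of `χ`. -/
noncomputable abbrev Phi {q : ℕ} [NeZero q] (χ : DirichletCharacter ℂ q) :
    AddMonoidAlgebra ℂ (ZMod q) :=
  ∑ x : ZMod q, AddMonoidAlgebra.single x (χ x)

lemma Jsum_eq {q : ℕ} [NeZero q] {k : ℕ} (χ : Fin k → DirichletCharacter ℂ q) (B : ZMod q) :
    Jsum χ B = (∏ i, Phi (χ i)).coeff B := by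
  unfold Jsum Phi
  rw [Finset.prod_univ_sum]
  rw [Fintype.piFinset_univ]
  rw [show (∑ x : Fin k → ZMod q, ∏ i, AddMonoidAlgebra.single (x i) ((χ i) (x i)))
      = ∑ x : Fin k → ZMod q, AddMonoidAlgebra.single (∑ i, x i) (∏ i, (χ i) (x i)) from
    Finset.sum_congr rfl fun x _ => AddMonoidAlgebra.prod_single _ _ _]
  rw [AddMonoidAlgebra.coeff_sum, Finsupp.finset_sum_apply]
  exact Finset.sum_congr rfl fun x _ => (Finsupp.single_apply).symm

lemma prod_apply_units {ι : Type*} {n : ℕ} (s : Finset ι) (f : ι → DirichletCharacter ℂ n)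
    {x : ZMod n} (hx : IsUnit x) : (∏ i ∈ s, f i) x = ∏ i ∈ s, f i x := by
  induction s using Finset.cons_induction with
  | empty => simp [MulChar.one_apply hx]
  | cons i s hi ih => rw [Finset.prod_cons, Finset.prod_cons, MulChar.mul_apply, ih]

lemma psi_three (ψ : DirichletCharacter ℂ 4) (hψ : ψ.IsPrimitive) : ψ 3 = -1 := by
  have h2 : ψ 3 * ψ 3 = 1 := by
    rw [← map_mul, show ((3:ZMod 4) * 3) = 1 by decide, map_one]
  rcases mul_self_eq_one_iff.mp h2 with h | h
  · exfalso
    have hone : ψ = 1 := by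
      apply MulChar.ext
      intro a
      rw [MulChar.one_apply_coe]
      rcases (by decide : ∀ a : (ZMod 4)ˣ, ((a : ZMod 4) = 1 ∨ (a : ZMod 4) = 3)) a with ha | ha
      · rw [ha, map_one]
      · rw [ha, h]
    rw [DirichletCharacter.isPrimitive_def, hone,
      DirichletCharacter.conductor_one] at hψ
    norm_num at hψ
  · exact h

lemma chi_five (χ : DirichletCharacter ℂ 8) (hχ : χ.IsPrimitive) : χ 5 = -1 := by
  have h2 : χ 5 * χ 5 = 1 := by
    rw [← map_mul, show ((5:ZMod 8) * 5) = 1 by decide, map_one]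
  rcases mul_self_eq_one_iff.mp h2 with h | h
  · exfalso
    have hft : χ.FactorsThrough 4 := by
      rw [DirichletCharacter.factorsThrough_iff_ker_unitsMap (⟨2, rfl⟩ : (4:ℕ) ∣ 8)]
      intro x hx
      rw [MonoidHom.mem_ker] at hx ⊢
      have : (x : ZMod 8) = 1 ∨ (x : ZMod 8) = 5 :=
        (by decide : ∀ x : (ZMod 8)ˣ, ZMod.unitsMap (⟨2, rfl⟩ : (4:ℕ) ∣ 8) x = 1 →
          ((x : ZMod 8) = 1 ∨ (x : ZMod 8) = 5)) x hx
      ext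
      rw [MulChar.coe_toUnitHom]
      rcases this with ha | ha
      · rw [ha, map_one]; rfl
      · rw [ha, h]; rfl
    have hle : χ.conductor ≤ 4 := Nat.sInf_le hft
    rw [DirichletCharacter.isPrimitive_def] at hχ
    omega
  · exact h

lemma chi_three (χ : DirichletCharacter ℂ 8) : χ 3 = 1 ∨ χ 3 = -1 := by
  apply mul_self_eq_one_iff.mp
  rw [← map_mul, show ((3:ZMod 8) * 3) = 1 by decide, map_one]

lemma chi_seven (χ : DirichletCharacter ℂ 8) (h5 : χ 5 = -1) : χ 7 = -(χ 3) := by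
  rw [show (7 : ZMod 8) = 3 * 5 by decide, map_mul, h5]; ring

noncomputable abbrev sgen : AddMonoidAlgebra ℂ (ZMod 8) :=
  AddMonoidAlgebra.single (1 : ZMod 8) (1 : ℂ)

lemma sgen_pow (n : ℕ) : sgen ^ n = AddMonoidAlgebra.single ((n : ZMod 8)) (1:ℂ) := by
  rw [AddMonoidAlgebra.single_pow, one_pow]; congr 1; simp [nsmul_eq_mul, mul_one]

lemma h8 : sgen ^ 8 = 1 := by
  rw [sgen_pow, show ((8:ℕ):ZMod 8) = 0 from by decide, AddMonoidAlgebra.one_def]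

noncomputable abbrev Aelem : AddMonoidAlgebra ℂ (ZMod 8) := sgen - sgen^3 - sgen^5 + sgen^7
noncomputable abbrev Belem : AddMonoidAlgebra ℂ (ZMod 8) := sgen + sgen^3 - sgen^5 - sgen^7

lemma Phi_eq (χ : DirichletCharacter ℂ 8) (h5 : χ 5 = -1) :
    Phi χ = (if χ 3 = 1 then Belem else Aelem) := by
  have h7 : χ 7 = -(χ 3) := chi_seven χ h5
  have h0 : χ 0 = 0 := χ.map_nonunit (by decide)
  have h2 : χ 2 = 0 := χ.map_nonunit (by decide)
  have h4 : χ 4 = 0 := χ.map_nonunit (by decide)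
  have h6 : χ 6 = 0 := χ.map_nonunit (by decide)
  have h1 : χ 1 = 1 := map_one χ
  unfold Phi
  rw [show (Finset.univ : Finset (ZMod 8)) = {0,1,2,3,4,5,6,7} from by decide]
  rw [Finset.sum_insert (by decide), Finset.sum_insert (by decide),
    Finset.sum_insert (by decide), Finset.sum_insert (by decide),
    Finset.sum_insert (by decide), Finset.sum_insert (by decide),
    Finset.sum_insert (by decide), Finset.sum_singleton]
  rw [h0, h1, h2, h4, h5, h6, h7]
  by_cases h : χ 3 = 1
  · rw [if_pos h, h]
    simp [Belem, Aelem, sgen, sgen_pow, Finsupp.single_neg, show ((3:ℕ):ZMod 8) = 3 from by decide,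
      show ((5:ℕ):ZMod 8) = 5 from by decide, show ((7:ℕ):ZMod 8) = 7 from by decide]
    abel
  · rw [if_neg h]
    have h3 : χ 3 = -1 := (chi_three χ).resolve_left h
    rw [h3]
    simp [Belem, Aelem, sgen, sgen_pow, Finsupp.single_neg, show ((3:ℕ):ZMod 8) = 3 from by decide,
      show ((5:ℕ):ZMod 8) = 5 from by decide, show ((7:ℕ):ZMod 8) = 7 from by decide]
    abel

lemma hA2 : Aelem^2 = 4 - 4*sgen^4 := by
  linear_combination (sgen^6 - 2*sgen^4 - sgen^2 + 4) * h8
lemma hB2 : Belem^2 = 4*sgen^4 - 4 := by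
  linear_combination (sgen^6 + 2*sgen^4 - sgen^2 - 4) * h8
lemma hAB : Aelem * Belem = 4*sgen^2 - 4*sgen^6 := by
  linear_combination (3*sgen^2 - sgen^6) * h8

lemma hwn (n : ℕ) : (1 - sgen^4)^n * (sgen^2 - sgen^6) = 2^n * (sgen^2 - sgen^6) := by
  induction n with
  | zero => simp
  | succ n ih => linear_combination ((1 - sgen^4)^n * sgen^2) * h8 + 2 * ih

lemma algmap (c : ℂ) : algebraMap ℂ (AddMonoidAlgebra ℂ (ZMod 8)) c
    = AddMonoidAlgebra.single (0 : ZMod 8) c := by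
  rw [AddMonoidAlgebra.coe_algebraMap]; simp

lemma pow2_calc : ∀ n:ℕ, ((2:ℂ))^(3*n+2) = 4^n * 4 * 2^n := by
  intro n
  induction n with
  | zero => norm_num
  | succ n ih =>
    rw [show 3*(n+1)+2 = (3*n+2)+3 from by ring, pow_add, ih, pow_succ, pow_succ, pow_succ]
    ring

lemma main_alg (a b : ℕ) :
    Belem^(2*b+1) * Aelem^(2*a+1) =
      AddMonoidAlgebra.single (2 : ZMod 8) ((-1)^b * 2^(3*(a+b)+2) : ℂ)
      - AddMonoidAlgebra.single (6 : ZMod 8) ((-1)^b * 2^(3*(a+b)+2) : ℂ) := by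
  have step1 : Belem^(2*b+1) * Aelem^(2*a+1)
      = (Belem^2)^b * (Aelem^2)^a * (Aelem * Belem) := by
    rw [pow_succ, pow_succ, pow_mul, pow_mul]; ring
  rw [step1, hA2, hB2, hAB]
  have e1 : (4*sgen^4 - 4 : AddMonoidAlgebra ℂ (ZMod 8)) = (-1) * (4 * (1 - sgen^4)) := by ring
  have e2 : (4 - 4*sgen^4 : AddMonoidAlgebra ℂ (ZMod 8)) = 4 * (1 - sgen^4) := by ring
  rw [e1, e2, mul_pow, mul_pow, mul_pow]
  have step2 : (-1:AddMonoidAlgebra ℂ (ZMod 8))^b * (4^b * (1 - sgen^4)^b) * (4^a * (1 - sgen^4)^a)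
        * (4*sgen^2 - 4*sgen^6)
      = ((-1)^b * 4^b * 4^a * 4 : AddMonoidAlgebra ℂ (ZMod 8))
        * ((1 - sgen^4)^(a+b) * (sgen^2 - sgen^6)) := by
    rw [pow_add]; ring
  rw [step2, hwn]
  have step3 : ((-1:AddMonoidAlgebra ℂ (ZMod 8))^b * 4^b * 4^a * 4) * (2^(a+b) * (sgen^2 - sgen^6))
      = algebraMap ℂ _ ((-1)^b * 4^b * 4^a * 4 * 2^(a+b)) * (sgen^2 - sgen^6) := by
    rw [map_mul, map_mul, map_mul, map_mul, map_pow, map_pow, map_pow, map_pow, map_neg,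
      map_one, map_ofNat, map_ofNat]
    ring
  rw [step3, algmap, mul_sub, sgen_pow, sgen_pow,
    AddMonoidAlgebra.single_mul_single, AddMonoidAlgebra.single_mul_single]
  have hc : ((-1:ℂ))^b * 4^b * 4^a * 4 * 2^(a+b) = (-1)^b * 2^(3*(a+b)+2) := by
    rw [pow2_calc (a+b), pow_add]; ring
  rw [hc]
  simp only [zero_add, mul_one, Nat.cast_ofNat]

end Aux

theorem stmt6 {k : ℕ} (hk : 2 ≤ k)
    (χ : Fin k → DirichletCharacter ℂ (2 ^ 3))
    (hprim : ∀ i, (χ i).IsPrimitive)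
    -- χ₁⋯χ_k is induced by the primitive character ψ mod 4
    (ψ : DirichletCharacter ℂ 4) (hψ : ψ.IsPrimitive)
    (hind : ∏ i, χ i = DirichletCharacter.changeLevel (by norm_num : (4:ℕ) ∣ 2 ^ 3) ψ) :
    Jsum χ ((2 : ℕ) : ZMod (2 ^ 3)) =
      (Real.sqrt 2 : ℂ) ^ (3 * (k - 1) + 1) * (-Complex.I) *
        omega ^ ((k : ℂ) - ∑ i, χ i (-1)) := by
  classical
  -- move everything to level 8
  let χ' : Fin k → DirichletCharacter ℂ 8 := χ
  have hprim8 : ∀ i, (χ' i).IsPrimitive := hprim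
  have hind8 : (∏ i, χ' i) = DirichletCharacter.changeLevel (by norm_num : (4:ℕ) ∣ 8) ψ := hind
  show Jsum (q := 8) χ' ((2 : ℕ) : ZMod 8) =
      (Real.sqrt 2 : ℂ) ^ (3 * (k - 1) + 1) * (-Complex.I) *
        omega ^ ((k : ℂ) - ∑ i, χ' i (-1 : ZMod 8))
  have h5 : ∀ i, χ' i 5 = -1 := fun i => chi_five (χ' i) (hprim8 i)
  have hmk : (Finset.univ.filter (fun i => χ' i 3 = 1)).card
      + (Finset.univ.filter (fun i => ¬ (χ' i 3 = 1))).card = k := by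
    rw [Finset.card_filter_add_card_filter_not, Finset.card_univ, Fintype.card_fin]
  set m : ℕ := (Finset.univ.filter (fun i => χ' i 3 = 1)).card with hm
  set mc : ℕ := (Finset.univ.filter (fun i => ¬ (χ' i 3 = 1))).card with hmc
  have u5 : IsUnit (5 : ZMod 8) := by decide
  have u3 : IsUnit (3 : ZMod 8) := by decide
  have heval : ∀ x : ZMod 8, IsUnit x → ∀ y : ZMod 4, ZMod.cast x = y →
      ∏ i, χ' i x = ψ y := by
    intro x hx y hy
    rw [← prod_apply_units Finset.univ χ' hx, hind8]
    lift x to (ZMod 8)ˣ using hx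
    rw [DirichletCharacter.changeLevel_eq_cast_of_dvd, hy]
  have hk_even : Even k := by
    have h1 : ∏ i, χ' i 5 = ψ 1 := heval 5 u5 1 (by decide)
    rw [map_one] at h1
    have h2 : ∏ i, χ' i 5 = (-1 : ℂ)^k := by
      rw [Finset.prod_congr rfl fun i _ => h5 i, Finset.prod_const, Finset.card_univ,
        Fintype.card_fin]
    rw [h2] at h1
    exact neg_one_pow_eq_one_iff_even (by norm_num : (-1:ℂ) ≠ 1) |>.mp h1
  have hite3 : ∀ i, χ' i 3 = if χ' i 3 = 1 then (1:ℂ) else -1 := by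
    intro i
    rcases chi_three (χ' i) with h | h
    · rw [if_pos h, h]
    · rw [if_neg (by rw [h]; norm_num), h]
  have hmc_odd : Odd mc := by
    have h1 : ∏ i, χ' i 3 = ψ 3 := heval 3 u3 3 (by decide)
    rw [psi_three ψ hψ] at h1
    have h2 : ∏ i, χ' i 3 = (-1 : ℂ)^mc := by
      rw [Finset.prod_congr rfl fun i _ => hite3 i]
      rw [Finset.prod_ite, Finset.prod_const_one, Finset.prod_const, one_mul]
    rw [h2] at h1
    rcases Nat.even_or_odd mc with h | h
    · exfalso; rw [h.neg_one_pow] at h1; norm_num at h1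
    · exact h
  -- extract parameters a b
  obtain ⟨a, hd⟩ := hmc_odd
  obtain ⟨c, hcc⟩ := hk_even
  have hmm : m = 2 * (m/2) + 1 := by omega
  set b : ℕ := m / 2 with hb
  have hmcc : mc = 2*a + 1 := by omega
  -- compute the Jacobi sum
  have hprod : (∏ i, Phi (χ' i)) = Belem ^ m * Aelem ^ mc := by
    rw [Finset.prod_congr rfl fun i _ => Phi_eq (χ' i) (h5 i)]
    rw [Finset.prod_ite, Finset.prod_const, Finset.prod_const]
  have hlhs : Jsum (q := 8) χ' ((2 : ℕ) : ZMod 8) = (-1:ℂ)^b * 2^(3*(a+b)+2) := by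
    rw [Jsum_eq, hprod, hmm, hmcc, main_alg]
    rw [show (((2:ℕ)) : ZMod 8) = (2 : ZMod 8) from by decide]
    rw [AddMonoidAlgebra.coeff_sub, Finsupp.sub_apply, AddMonoidAlgebra.coeff_single,
      AddMonoidAlgebra.coeff_single]
    rw [Finsupp.single_eq_same]
    rw [Finsupp.single_eq_of_ne (by decide : (2:ZMod 8) ≠ 6), sub_zero]
  -- compute the sum of χ i (-1)
  have hsum : ∑ i, χ' i (-1 : ZMod 8) = (mc : ℂ) - (m : ℂ) := by
    rw [show ((-1) : ZMod 8) = (7 : ZMod 8) from by decide]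
    have hite7 : ∀ i, χ' i 7 = if χ' i 3 = 1 then (-1:ℂ) else 1 := by
      intro i
      rw [chi_seven (χ' i) (h5 i)]
      rcases chi_three (χ' i) with h | h
      · rw [if_pos h, h]
      · rw [if_neg (by rw [h]; norm_num), h]; norm_num
    rw [Finset.sum_congr rfl fun i _ => hite7 i]
    rw [Finset.sum_ite, Finset.sum_const, Finset.sum_const]
    simp only [nsmul_eq_mul, mul_one, mul_neg_one]
    rw [← hm, ← hmc]
    ring
  have hexp : (k : ℂ) - ∑ i, χ' i (-1 : ZMod 8) = ((4*b+2 : ℕ) : ℂ) := by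
    rw [hsum, show k = m + mc from hmk.symm, hmm, hmcc]
    push_cast
    ring
  have homega2 : omega^2 = Complex.I := by
    unfold omega
    rw [← Complex.exp_nat_mul]
    rw [show ((2:ℕ):ℂ) * ((Real.pi : ℂ) * Complex.I / 4) = ((Real.pi/2 : ℝ) : ℂ) * Complex.I from
      by push_cast; ring]
    rw [Complex.exp_mul_I, ← Complex.ofReal_cos, ← Complex.ofReal_sin,
      Real.cos_pi_div_two, Real.sin_pi_div_two]
    simp
  have homega : omega ^ ((k : ℂ) - ∑ i, χ' i (-1 : ZMod 8)) = (-1:ℂ)^b * Complex.I := by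
    rw [hexp, Complex.cpow_natCast]
    rw [show 4*b+2 = 2*(2*b+1) from by ring, pow_mul, homega2]
    rw [pow_succ, pow_mul, Complex.I_sq]
  have hsqrt : ((Real.sqrt 2 : ℂ)) ^ (3 * (k - 1) + 1) = (2:ℂ)^(3*(a+b)+2) := by
    have hkk : k = 2*a + 2*b + 2 := by omega
    rw [show 3 * (k-1) + 1 = 2 * (3*(a+b)+2) from by omega, pow_mul]
    congr 1
    rw [← Complex.ofReal_pow, Real.sq_sqrt (by norm_num : (2:ℝ) ≥ 0)]
    norm_num
  rw [hlhs, homega, hsqrt]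
  have hI : Complex.I * Complex.I = -1 := Complex.I_mul_I
  linear_combination ((-1:ℂ)^b * 2^(3*(a+b)+2)) * hI
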